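/- Let E be a real inner product space with 3 ≤ dim E < ∞, and let S = {w ∈ E : ‖w‖ = 1} be its unit sphere. Let u₀ ∈ S and r₀ ∈ (0,1), and let u₁, …, u_m ∈ S with radii r₁, …, r_m ∈ (0, √2). Define S' = {w ∈ S : ‖w − u₀‖ = r₀} ∪ {w ∈ S : ‖w + u₀‖ = r₀} ∪ ⋃_{i=1}^{m} {w ∈ S : ‖w − u_i‖ = r_i}. Then there exists δ > 0 such that for every two-dimensional linear subspace P of E there is a unit vector w ∈ P satisfying ‖w − u₀‖ > r₀, ‖w + u₀‖ > r₀, and ‖w − w'‖ > δ for every w' ∈ S'. -/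

import Mathlib

set_option maxHeartbeats 1600000

open Real

namespace FlagAux

lemma trig_identity (a b θ₁ θ₂ : ℝ) :
    (a * cos θ₁ + b * sin θ₁ - (a * cos θ₂ + b * sin θ₂))^2
      + (b * cos θ₁ - a * sin θ₁ - (b * cos θ₂ - a * sin θ₂))^2
    = (a^2 + b^2) * (2 - 2 * cos (θ₁ - θ₂)) := by
  rw [Real.cos_sub]
  linear_combination (a^2 + b^2) * (Real.sin_sq_add_cos_sq θ₁)
    + (a^2 + b^2) * (Real.sin_sq_add_cos_sq θ₂)

lemma point_identity (a b θ : ℝ) :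
    (a * cos θ + b * sin θ)^2 + (b * cos θ - a * sin θ)^2 = a^2 + b^2 := by
  linear_combination (a^2 + b^2) * (Real.sin_sq_add_cos_sq θ)

lemma key_alg (g₁ g₂ h₁ h₂ R c δ E : ℝ) (hc : 0 < c) (hδ : 0 < δ) (hδc : δ ≤ c / 2)
    (id₁ : g₁^2 + h₁^2 = R) (id₂ : g₂^2 + h₂^2 = R)
    (hb1 : |g₁ - c| ≤ δ) (hb2 : |g₂ - c| ≤ δ) (hh : 0 ≤ h₁ * h₂)
    (hE : (g₁ - g₂)^2 + (h₁ - h₂)^2 = R * E) (hEnn : 0 ≤ E) :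
    E ≤ 32 * δ / c := by
  obtain ⟨hb1l, hb1r⟩ := abs_le.mp hb1
  obtain ⟨hb2l, hb2r⟩ := abs_le.mp hb2
  have hg₁ : c/2 ≤ g₁ := by linarith
  have hg₂ : c/2 ≤ g₂ := by linarith
  have hA : (g₂ - g₁)^2 ≤ 4*δ^2 := by nlinarith
  have hB : (g₂ + g₁)^2 ≤ (2*c + 2*δ)^2 := by nlinarith
  have hd : h₁^2 - h₂^2 = g₂^2 - g₁^2 := by linarith
  have e1 : (h₁ - h₂)^2 * (h₁ + h₂)^2 = (g₂^2 - g₁^2)^2 := by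
    linear_combination (h₁^2 - h₂^2 + g₂^2 - g₁^2) * hd
  have e2 : (h₁ - h₂)^2 ≤ (h₁ + h₂)^2 := by nlinarith
  have e3 : (g₂^2 - g₁^2)^2 ≤ 4*δ^2 * (2*c + 2*δ)^2 := by
    calc (g₂^2 - g₁^2)^2 = (g₂ - g₁)^2 * (g₂ + g₁)^2 := by ring
      _ ≤ 4*δ^2 * (2*c + 2*δ)^2 := by
          exact mul_le_mul hA hB (sq_nonneg _) (by positivity)
  have e4 : ((h₁ - h₂)^2)^2 ≤ (4*δ*(c + δ))^2 := by
    calc ((h₁ - h₂)^2)^2 = (h₁ - h₂)^2 * (h₁ - h₂)^2 := by ring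
      _ ≤ (h₁ - h₂)^2 * (h₁ + h₂)^2 := mul_le_mul_of_nonneg_left e2 (sq_nonneg _)
      _ = (g₂^2 - g₁^2)^2 := e1
      _ ≤ 4*δ^2 * (2*c + 2*δ)^2 := e3
      _ = (4*δ*(c + δ))^2 := by ring
  have hKpos : (0:ℝ) < 4*δ*(c + δ) := by positivity
  have e5 : (h₁ - h₂)^2 ≤ 4*δ*(c + δ) := by
    have h := Real.sqrt_le_sqrt e4
    rwa [Real.sqrt_sq (sq_nonneg _), Real.sqrt_sq hKpos.le] at h
  have hR : (c/2)^2 ≤ R := by nlinarith [sq_nonneg h₁]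
  rw [le_div_iff₀ hc]
  nlinarith [hE, e5, hA, hR, hEnn, mul_nonneg hEnn hc.le]

/-- Key quantitative lemma: two points on the circle whose inner product with a
fixed vector is `δ`-close to `c > 0`, lying on the same side, are close. -/
lemma key (a b c δ θ₁ θ₂ : ℝ) (hc : 0 < c) (hδ : 0 < δ) (hδc : δ ≤ c / 2)
    (h1 : |a * cos θ₁ + b * sin θ₁ - c| ≤ δ)
    (h2 : |a * cos θ₂ + b * sin θ₂ - c| ≤ δ)
    (hh : 0 ≤ (b * cos θ₁ - a * sin θ₁) * (b * cos θ₂ - a * sin θ₂)) :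
    2 - 2 * cos (θ₁ - θ₂) ≤ 32 * δ / c := by
  refine key_alg (a * cos θ₁ + b * sin θ₁) (a * cos θ₂ + b * sin θ₂)
    (b * cos θ₁ - a * sin θ₁) (b * cos θ₂ - a * sin θ₂) (a^2 + b^2) c δ _
    hc hδ hδc (point_identity a b θ₁) (point_identity a b θ₂) h1 h2 hh
    (trig_identity a b θ₁ θ₂) ?_
  nlinarith [Real.cos_le_one (θ₁ - θ₂)]

lemma lower (s Δ : ℝ) (hΔ : 0 < Δ) (h1 : Δ ≤ |s|) (h2 : |s| ≤ 1) :
    Δ^2 / 2 < 2 - 2 * cos s := by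
  have hx0 : 0 < |s| / 2 := by linarith
  have hx1 : |s| / 2 ≤ 1 := by linarith
  have hsin := Real.sin_gt_sub_cube hx0
  have hcos : cos s = 1 - 2 * sin (|s|/2)^2 := by
    have hc2 := Real.cos_two_mul (|s|/2)
    have hsc := Real.sin_sq_add_cos_sq (|s|/2)
    rw [show 2 * (|s|/2) = |s| by ring] at hc2
    rw [← Real.cos_abs]
    linarith
  have hx2 : (|s|/2)^2 ≤ 1/4 := by nlinarith
  have hsin2 : (15/16) * (|s|/2) < sin (|s|/2) := by nlinarith
  rw [hcos]
  nlinarith [hsin2, hx0, h1, hΔ]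

lemma lip (a b θ ψ : ℝ) (hR : a^2 + b^2 ≤ 1) :
    |a * cos θ + b * sin θ - (a * cos ψ + b * sin ψ)| ≤ |θ - ψ| := by
  have t := trig_identity a b θ ψ
  have hc : 2 - 2 * cos (θ - ψ) ≤ (θ - ψ)^2 := by
    nlinarith [Real.one_sub_sq_div_two_le_cos (x := θ - ψ)]
  have hcnn : 0 ≤ 2 - 2 * cos (θ - ψ) := by nlinarith [Real.cos_le_one (θ - ψ)]
  have hsq : (a * cos θ + b * sin θ - (a * cos ψ + b * sin ψ))^2 ≤ (θ - ψ)^2 := by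
    nlinarith [sq_nonneg (b * cos θ - a * sin θ - (b * cos ψ - a * sin ψ))]
  have := Real.sqrt_le_sqrt hsq
  rwa [Real.sqrt_sq_eq_abs, Real.sqrt_sq_eq_abs] at this

lemma sign_pair (x y z : ℝ) (hxy : x*y < 0) (hxz : x*z < 0) : 0 ≤ y*z := by
  nlinarith [mul_pos_of_neg_of_neg hxy hxz, sq_nonneg x]

lemma sq_le_one_of (x : ℝ) (h0 : 0 < x) (h1 : x < 1) : x^2 ≤ 1 := by nlinarith

lemma le_one_of_sq_le_self (R : ℝ) (h : R^2 ≤ R) : R ≤ 1 := by nlinarith [sq_nonneg (R-1)]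

lemma eq_one_of_sq_eq_one (x : ℝ) (hx : 0 ≤ x) (h : x^2 = 1) : x = 1 := by
  rw [← Real.sqrt_sq hx, h, Real.sqrt_one]

end FlagAux

open RealInnerProductSpace FlagAux

/-- paper's Lemma 2. Let `E` be a real inner product space with
`3 ≤ dim E < ∞` and unit sphere `S`. Let `u₀ ∈ S`, `r₀ ∈ (0,1)`, and `u₁, …, u_m ∈ S`
with radii `r₁, …, r_m ∈ (0, √2)`. Let `S'` be the union of the cap boundaries
`{w ∈ S : ‖w - u₀‖ = r₀}`, `{w ∈ S : ‖w + u₀‖ = r₀}` and `{w ∈ S : ‖w - u_i‖ = r_i}`.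
Then there exists `δ > 0` such that every two-dimensional subspace `P ⊆ E` contains
a unit vector `w` with `‖w - u₀‖ > r₀`, `‖w + u₀‖ > r₀`, and `‖w - w'‖ > δ` for all
`w' ∈ S'`. -/
theorem flagwise_stmt4 (E : Type*) [NormedAddCommGroup E] [InnerProductSpace ℝ E]
    [FiniteDimensional ℝ E] (hdim : 3 ≤ Module.finrank ℝ E)
    (u₀ : E) (hu₀ : ‖u₀‖ = 1) (r₀ : ℝ) (hr₀ : r₀ ∈ Set.Ioo (0 : ℝ) 1)
    (m : ℕ) (u : Fin m → E) (hu : ∀ i, ‖u i‖ = 1)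
    (r : Fin m → ℝ) (hr : ∀ i, r i ∈ Set.Ioo (0 : ℝ) (Real.sqrt 2))
    (S' : Set E)
    (hS' : S' = {w : E | ‖w‖ = 1 ∧ ‖w - u₀‖ = r₀} ∪ {w : E | ‖w‖ = 1 ∧ ‖w + u₀‖ = r₀}
      ∪ ⋃ i : Fin m, {w : E | ‖w‖ = 1 ∧ ‖w - u i‖ = r i}) :
    ∃ δ > 0, ∀ P : Submodule ℝ E, Module.finrank ℝ P = 2 →
      ∃ w ∈ P, ‖w‖ = 1 ∧ r₀ < ‖w - u₀‖ ∧ r₀ < ‖w + u₀‖ ∧ ∀ w' ∈ S', δ < ‖w - w'‖ := by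
  obtain ⟨hr₀0, hr₀1⟩ := hr₀
  -- the cap "heights"
  have hr₀sq : r₀^2 < 1 := by nlinarith
  set c₀ : ℝ := 1 - r₀^2/2 with hc₀def
  have hc₀pos : 0 < c₀ := by rw [hc₀def]; nlinarith
  have hc₀lt1 : c₀ < 1 := by rw [hc₀def]; nlinarith
  set ci : Fin m → ℝ := fun i => 1 - (r i)^2/2 with hcidef
  have hcipos : ∀ i, 0 < ci i := by
    intro i
    obtain ⟨h0, h2⟩ := hr i
    have hs2 : Real.sqrt 2 * Real.sqrt 2 = 2 := Real.mul_self_sqrt (by norm_num)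
    have : r i * r i < 2 := by nlinarith [Real.sqrt_nonneg 2]
    show 0 < 1 - (r i)^2/2
    nlinarith
  -- the minimum height
  set cs : Finset ℝ := insert c₀ (Finset.univ.image ci) with hcsdef
  have hcsne : cs.Nonempty := ⟨c₀, Finset.mem_insert_self _ _⟩
  set cm : ℝ := cs.min' hcsne with hcmdef
  have hcmpos : 0 < cm := by
    have hall : ∀ x ∈ cs, 0 < x := by
      intro x hx
      rcases Finset.mem_insert.mp hx with h | h
      · rw [h]; exact hc₀pos
      · obtain ⟨i, -, hi⟩ := Finset.mem_image.mp h
        rw [← hi]; exact hcipos i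
    exact hall _ (cs.min'_mem hcsne)
  have hcmle0 : cm ≤ c₀ := Finset.min'_le _ _ (Finset.mem_insert_self _ _)
  have hcmlei : ∀ i, cm ≤ ci i := fun i =>
    Finset.min'_le _ _ (Finset.mem_insert_of_mem (Finset.mem_image_of_mem _ (Finset.mem_univ i)))
  -- spacing and δ
  set Δ : ℝ := c₀ / (2*(m:ℝ)+1) with hΔdef
  have hΔpos : 0 < Δ := by rw [hΔdef]; positivity
  have hΔlec₀ : Δ ≤ c₀ := by
    rw [hΔdef]
    apply div_le_self hc₀pos.le
    have : (0:ℝ) ≤ (m:ℝ) := Nat.cast_nonneg m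
    linarith
  have hΔlt1 : Δ < 1 := lt_of_le_of_lt hΔlec₀ hc₀lt1
  have hΔsq1 : Δ^2 ≤ 1 := FlagAux.sq_le_one_of Δ hΔpos hΔlt1
  have hcmΔ : cm * Δ^2 ≤ cm := by
    have := mul_le_mul_of_nonneg_left hΔsq1 hcmpos.le
    linarith only [this]
  set δ : ℝ := cm * Δ^2 / 64 with hδdef
  have hδpos : 0 < δ := by rw [hδdef]; positivity
  have hδcm2 : δ ≤ cm / 2 := by rw [hδdef]; linarith
  have hδc₀2 : δ < c₀ / 2 := by rw [hδdef]; linarith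
  clear_value c₀ ci cs cm Δ δ
  refine ⟨δ, hδpos, ?_⟩
  intro P hP
  -- orthonormal basis of P
  let B : OrthonormalBasis (Fin 2) ℝ P := (stdOrthonormalBasis ℝ P).reindex (finCongr hP)
  set e0 : E := (B 0 : E) with he0def
  set e1 : E := (B 1 : E) with he1def
  have he0P : e0 ∈ P := SetLike.coe_mem _
  have he1P : e1 ∈ P := SetLike.coe_mem _
  have he0 : ‖e0‖ = 1 := by rw [he0def, Submodule.norm_coe]; exact B.orthonormal.1 0
  have he1 : ‖e1‖ = 1 := by rw [he1def, Submodule.norm_coe]; exact B.orthonormal.1 1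
  have h01 : ⟪e0, e1⟫ = 0 := by
    rw [he0def, he1def, ← Submodule.coe_inner]
    exact B.orthonormal.2 (by decide : (0 : Fin 2) ≠ 1)
  have h00 : ⟪e0, e0⟫ = 1 := by
    rw [real_inner_self_eq_norm_sq, he0]; norm_num
  have h11 : ⟪e1, e1⟫ = 1 := by
    rw [real_inner_self_eq_norm_sq, he1]; norm_num
  have h10 : ⟪e1, e0⟫ = 0 := by rw [real_inner_comm]; exact h01
  clear_value e0 e1
  -- basic facts about circle points
  have hinner : ∀ (θ : ℝ) (v : E), ⟪cos θ • e0 + sin θ • e1, v⟫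
      = ⟪e0, v⟫ * cos θ + ⟪e1, v⟫ * sin θ := by
    intro θ v
    rw [inner_add_left, real_inner_smul_left, real_inner_smul_left]; ring
  have hinnerR : ∀ (θ : ℝ) (v : E), ⟪v, cos θ • e0 + sin θ • e1⟫
      = ⟪v, e0⟫ * cos θ + ⟪v, e1⟫ * sin θ := by
    intro θ v
    rw [inner_add_right, real_inner_smul_right, real_inner_smul_right]; ring
  have hwnorm : ∀ θ : ℝ, ‖cos θ • e0 + sin θ • e1‖ = 1 := by
    intro θ
    have hsq : ‖cos θ • e0 + sin θ • e1‖^2 = 1 := by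
      rw [← real_inner_self_eq_norm_sq, hinner, hinnerR, hinnerR]
      simp only [h00, h01, h10, h11]
      linear_combination Real.sin_sq_add_cos_sq θ
    exact FlagAux.eq_one_of_sq_eq_one _ (norm_nonneg _) hsq
  -- Bessel-type inequality
  have hbessel : ∀ v : E, ‖v‖ = 1 → ⟪e0, v⟫^2 + ⟪e1, v⟫^2 ≤ 1 := by
    intro v hv
    set α := ⟪e0, v⟫ with hα
    set β := ⟪e1, v⟫ with hβ
    have hp : ⟪α • e0 + β • e1, v⟫ = α^2 + β^2 := by
      rw [inner_add_left, real_inner_smul_left, real_inner_smul_left]; ring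
    have hA0 : ⟪e0, α • e0 + β • e1⟫ = α := by
      rw [inner_add_right, real_inner_smul_right, real_inner_smul_right, h00, h01]; ring
    have hA1 : ⟪e1, α • e0 + β • e1⟫ = β := by
      rw [inner_add_right, real_inner_smul_right, real_inner_smul_right, h10, h11]; ring
    have hpn : ⟪α • e0 + β • e1, α • e0 + β • e1⟫ = α^2 + β^2 := by
      rw [inner_add_left, real_inner_smul_left, real_inner_smul_left, hA0, hA1]; ring
    have hcs := real_inner_mul_inner_self_le (α • e0 + β • e1) v
    have hvv : ⟪v, v⟫ = 1 := by rw [real_inner_self_eq_norm_sq, hv]; norm_num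
    rw [hp, hpn, hvv, mul_one] at hcs
    have hsq' : (α^2 + β^2)^2 ≤ α^2 + β^2 := by rw [sq]; exact hcs
    exact FlagAux.le_one_of_sq_le_self _ hsq'
  -- a point θc where the u₀-functional vanishes
  obtain ⟨θc, hθc⟩ : ∃ θ, ⟪e0, u₀⟫ * cos θ + ⟪e1, u₀⟫ * sin θ = 0 := by
    set α := ⟪e0, u₀⟫; set β := ⟪e1, u₀⟫
    rcases eq_or_ne (Complex.I * (α : ℂ) - (β : ℂ)) 0 with hz | hz
    · have hα : α = 0 := by have := congrArg Complex.im hz; simpa using this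
      have hβ : β = 0 := by have := congrArg Complex.re hz; simpa using this
      exact ⟨0, by simp [hα, hβ]⟩
    · refine ⟨Complex.arg (Complex.I * (α : ℂ) - (β : ℂ)), ?_⟩
      have habs : (0:ℝ) < ‖Complex.I * (α : ℂ) - (β : ℂ)‖ := by
        simpa using norm_pos_iff.mpr hz
      rw [Complex.cos_arg hz, Complex.sin_arg]
      simp only [Complex.sub_re, Complex.sub_im, Complex.mul_re, Complex.mul_im,
        Complex.I_re, Complex.I_im, Complex.ofReal_re, Complex.ofReal_im]
      field_simp
      ring
  -- the candidate angles
  set θf : Fin (2*m+1) → ℝ := fun k => θc + (((k:ℕ):ℝ) - (m:ℝ)) * Δ with hθfdef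
  clear_value θf
  -- a good candidate exists
  have hgood : ∃ k : Fin (2*m+1), ∀ i : Fin m,
      δ < |⟪e0, u i⟫ * cos (θf k) + ⟪e1, u i⟫ * sin (θf k) - ci i| := by
    by_contra hbad
    push_neg at hbad
    choose f hf using hbad
    obtain ⟨i, -, hi⟩ := Finset.exists_lt_card_fiber_of_mul_lt_card_of_maps_to
      (s := (Finset.univ : Finset (Fin (2*m+1)))) (t := (Finset.univ : Finset (Fin m)))
      (f := f) (n := 2) (fun k _ => Finset.mem_univ _)
      (by simp only [Finset.card_univ, Fintype.card_fin]; omega)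
    rw [Finset.two_lt_card_iff] at hi
    obtain ⟨k₁, k₂, k₃, hk₁, hk₂, hk₃, h12, h13, h23⟩ := hi
    have hfk₁ : f k₁ = i := (Finset.mem_filter.mp hk₁).2
    have hfk₂ : f k₂ = i := (Finset.mem_filter.mp hk₂).2
    have hfk₃ : f k₃ = i := (Finset.mem_filter.mp hk₃).2
    have hb₁ := hf k₁; rw [hfk₁] at hb₁
    have hb₂ := hf k₂; rw [hfk₂] at hb₂
    have hb₃ := hf k₃; rw [hfk₃] at hb₃
    set A : ℝ := ⟪e0, u i⟫
    set Bc : ℝ := ⟪e1, u i⟫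
    set H : Fin (2*m+1) → ℝ := fun k => Bc * cos (θf k) - A * sin (θf k) with hHdef
    -- among three, two lie on the same side
    have hpair : ∃ p q : Fin (2*m+1), p ≠ q ∧
        |A * cos (θf p) + Bc * sin (θf p) - ci i| ≤ δ ∧
        |A * cos (θf q) + Bc * sin (θf q) - ci i| ≤ δ ∧ 0 ≤ H p * H q := by
      rcases le_or_gt 0 (H k₁ * H k₂) with h | h
      · exact ⟨k₁, k₂, h12, hb₁, hb₂, h⟩
      rcases le_or_gt 0 (H k₁ * H k₃) with h' | h'
      · exact ⟨k₁, k₃, h13, hb₁, hb₃, h'⟩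
      exact ⟨k₂, k₃, h23, hb₂, hb₃, FlagAux.sign_pair (H k₁) (H k₂) (H k₃) h h'⟩
    obtain ⟨p, q, hpq, hbp, hbq, hHpq⟩ := hpair
    -- apply the key estimate
    have hδci : δ ≤ ci i / 2 := by
      have h := hcmlei i
      linarith only [h, hδcm2]
    have hkey := FlagAux.key A Bc (ci i) δ (θf p) (θf q) (hcipos i) hδpos hδci hbp hbq hHpq
    -- upper bound 32δ/ci ≤ Δ²/2
    have hup : 32 * δ / ci i ≤ Δ^2 / 2 := by
      have h1 : 32 * δ / ci i ≤ 32 * δ / cm := by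
        gcongr
        exact hcmlei i
      have h2 : 32 * δ / cm = Δ^2 / 2 := by
        rw [hδdef]; field_simp; ring
      linarith
    -- lower bound via separation of candidates
    have hvp : ((p:ℕ):ℝ) ≤ 2*(m:ℝ) := by
      have h := p.isLt
      have h' : (p:ℕ) ≤ 2*m := by omega
      exact_mod_cast h'
    have hvq : ((q:ℕ):ℝ) ≤ 2*(m:ℝ) := by
      have h := q.isLt
      have h' : (q:ℕ) ≤ 2*m := by omega
      exact_mod_cast h'
    have hvpq : (p:ℕ) ≠ (q:ℕ) := fun h => hpq (Fin.ext h)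
    have hsep : (1:ℝ) ≤ |((p:ℕ):ℝ) - ((q:ℕ):ℝ)| := by
      rcases lt_or_gt_of_ne hvpq with h | h
      · have h' : (p:ℕ) + 1 ≤ (q:ℕ) := h
        have h'' : ((p:ℕ):ℝ) + 1 ≤ ((q:ℕ):ℝ) := by exact_mod_cast h'
        rw [abs_sub_comm, abs_of_nonneg (by linarith)]; linarith
      · have h' : (q:ℕ) + 1 ≤ (p:ℕ) := h
        have h'' : ((q:ℕ):ℝ) + 1 ≤ ((p:ℕ):ℝ) := by exact_mod_cast h'
        rw [abs_of_nonneg (by linarith)]; linarith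
    have hbound : |((p:ℕ):ℝ) - ((q:ℕ):ℝ)| ≤ 2*(m:ℝ) := by
      rw [abs_le]
      have h1 : (0:ℝ) ≤ ((p:ℕ):ℝ) := Nat.cast_nonneg _
      have h2 : (0:ℝ) ≤ ((q:ℕ):ℝ) := Nat.cast_nonneg _
      constructor <;> linarith
    have hθdiff : θf p - θf q = (((p:ℕ):ℝ) - ((q:ℕ):ℝ)) * Δ := by
      rw [hθfdef]; ring
    have habsθ : |θf p - θf q| = |((p:ℕ):ℝ) - ((q:ℕ):ℝ)| * Δ := by
      rw [hθdiff, abs_mul, abs_of_pos hΔpos]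
    have hlo : Δ ≤ |θf p - θf q| := by
      rw [habsθ]
      calc Δ = 1 * Δ := (one_mul Δ).symm
        _ ≤ |((p:ℕ):ℝ) - ((q:ℕ):ℝ)| * Δ := mul_le_mul_of_nonneg_right hsep hΔpos.le
    have hhi : |θf p - θf q| ≤ 1 := by
      rw [habsθ]
      have h2m : 2*(m:ℝ) * Δ ≤ c₀ := by
        have heq : 2*(m:ℝ) * Δ = (2*(m:ℝ)*c₀) / (2*(m:ℝ)+1) := by
          rw [hΔdef]; ring
        rw [heq, div_le_iff₀ (by positivity : (0:ℝ) < 2*(m:ℝ)+1)]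
        linarith only [hc₀pos]
      have h3 : |((p:ℕ):ℝ) - ((q:ℕ):ℝ)| * Δ ≤ 2*(m:ℝ) * Δ :=
        mul_le_mul_of_nonneg_right hbound hΔpos.le
      linarith only [h3, h2m, hc₀lt1]
    have hlow := FlagAux.lower (θf p - θf q) Δ hΔpos hlo hhi
    linarith only [hkey, hup, hlow]
  obtain ⟨k, hk⟩ := hgood
  -- the good unit vector
  set θ : ℝ := θf k with hθdef2
  set w : E := cos θ • e0 + sin θ • e1 with hwdef
  have hwP : w ∈ P := P.add_mem (P.smul_mem _ he0P) (P.smul_mem _ he1P)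
  have hwn : ‖w‖ = 1 := hwnorm θ
  have hwu₀eq : ⟪w, u₀⟫ = ⟪e0, u₀⟫ * cos θ + ⟪e1, u₀⟫ * sin θ := by
    rw [hwdef]; exact hinner θ u₀
  clear_value θ w
  -- small inner product with u₀
  have hwu₀ : |⟪w, u₀⟫| ≤ c₀ / 2 := by
    have hlip := FlagAux.lip ⟪e0, u₀⟫ ⟪e1, u₀⟫ θ θc (hbessel u₀ hu₀)
    rw [hθc, sub_zero] at hlip
    have hθθc : θ - θc = (((k:ℕ):ℝ) - (m:ℝ)) * Δ := by
      rw [hθdef2, hθfdef]; ring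
    have hk2m : ((k:ℕ):ℝ) ≤ 2*(m:ℝ) := by
      have h := k.isLt
      have h' : (k:ℕ) ≤ 2*m := by omega
      exact_mod_cast h'
    have hk0 : (0:ℝ) ≤ ((k:ℕ):ℝ) := Nat.cast_nonneg _
    have hkm : |(((k:ℕ):ℝ) - (m:ℝ))| ≤ (m:ℝ) := by
      rw [abs_le]; constructor <;> linarith
    have habs2 : |θ - θc| ≤ (m:ℝ) * Δ := by
      rw [hθθc, abs_mul, abs_of_pos hΔpos]
      exact mul_le_mul_of_nonneg_right hkm hΔpos.le
    have hmΔ : (m:ℝ) * Δ ≤ c₀ / 2 := by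
      have heq : (m:ℝ) * Δ = ((m:ℝ)*c₀) / (2*(m:ℝ)+1) := by rw [hΔdef]; ring
      rw [heq, div_le_iff₀ (by positivity : (0:ℝ) < 2*(m:ℝ)+1)]
      linarith only [hc₀pos]
    rw [hwu₀eq]
    linarith only [hlip, habs2, hmΔ]
  have habs' := abs_le.mp hwu₀
  have hsubn : ‖w - u₀‖^2 = 2 - 2*⟪w, u₀⟫ := by
    rw [norm_sub_sq_real, hwn, hu₀]; ring
  have haddn : ‖w + u₀‖^2 = 2 + 2*⟪w, u₀⟫ := by
    rw [norm_add_sq_real, hwn, hu₀]; ring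
  refine ⟨w, hwP, hwn, ?_, ?_, ?_⟩
  · have h2 : r₀^2 < ‖w - u₀‖^2 := by
      rw [hsubn]
      have h5 := habs'.2
      rw [hc₀def] at h5
      linarith only [h5, hr₀sq]
    exact lt_of_pow_lt_pow_left₀ 2 (norm_nonneg _) h2
  · have h2 : r₀^2 < ‖w + u₀‖^2 := by
      rw [haddn]
      have h5 := habs'.1
      rw [hc₀def] at h5
      linarith only [h5, hr₀sq]
    exact lt_of_pow_lt_pow_left₀ 2 (norm_nonneg _) h2
  · intro w' hw'
    rw [hS'] at hw'
    rcases hw' with (⟨hn', he'⟩ | ⟨hn', he'⟩) | hw'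
    · have hinn' : ⟪w', u₀⟫ = c₀ := by
        have h3 : ‖w' - u₀‖^2 = 2 - 2*⟪w', u₀⟫ := by
          rw [norm_sub_sq_real, hn', hu₀]; ring
        rw [he'] at h3
        rw [hc₀def]; linarith only [h3]
      have hcs2 : |⟪w - w', u₀⟫| ≤ ‖w - w'‖ := by
        have h4 := abs_real_inner_le_norm (w - w') u₀
        rwa [hu₀, mul_one] at h4
      have hsubin : ⟪w - w', u₀⟫ = ⟪w, u₀⟫ - c₀ := by
        rw [inner_sub_left, hinn']
      have hlb : c₀/2 ≤ |⟪w, u₀⟫ - c₀| := by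
        have hneg := neg_le_abs (⟪w, u₀⟫ - c₀)
        linarith only [hneg, habs'.2]
      rw [hsubin] at hcs2
      linarith only [hcs2, hlb, hδc₀2]
    · have hinn' : ⟪w', u₀⟫ = -c₀ := by
        have h3 : ‖w' + u₀‖^2 = 2 + 2*⟪w', u₀⟫ := by
          rw [norm_add_sq_real, hn', hu₀]; ring
        rw [he'] at h3
        rw [hc₀def]; linarith only [h3]
      have hcs2 : |⟪w - w', u₀⟫| ≤ ‖w - w'‖ := by
        have h4 := abs_real_inner_le_norm (w - w') u₀
        rwa [hu₀, mul_one] at h4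
      have hsubin : ⟪w - w', u₀⟫ = ⟪w, u₀⟫ + c₀ := by
        rw [inner_sub_left, hinn']; ring
      have hlb : c₀/2 ≤ |⟪w, u₀⟫ + c₀| := by
        have hpos := le_abs_self (⟪w, u₀⟫ + c₀)
        linarith only [hpos, habs'.1]
      rw [hsubin] at hcs2
      linarith only [hcs2, hlb, hδc₀2]
    · obtain ⟨i, hmem⟩ := Set.mem_iUnion.mp hw'
      obtain ⟨hn', he'⟩ := hmem
      have hinn' : ⟪w', u i⟫ = ci i := by
        have h3 : ‖w' - u i‖^2 = 2 - 2*⟪w', u i⟫ := by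
          rw [norm_sub_sq_real, hn', hu i]; ring
        rw [he'] at h3
        rw [hcidef]
        simp only
        linarith only [h3]
      have hcs2 : |⟪w - w', u i⟫| ≤ ‖w - w'‖ := by
        have h4 := abs_real_inner_le_norm (w - w') (u i)
        rwa [hu i, mul_one] at h4
      have hwin : ⟪w, u i⟫ = ⟪e0, u i⟫ * cos θ + ⟪e1, u i⟫ * sin θ := by
        rw [hwdef]; exact hinner θ (u i)
      have hsubin : ⟪w - w', u i⟫ = ⟪e0, u i⟫ * cos θ + ⟪e1, u i⟫ * sin θ - ci i := by
        rw [inner_sub_left, hinn', hwin]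
      rw [hsubin] at hcs2
      have hgk := hk i
      linarith only [hcs2, hgk]
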